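/- Let X and Y be metric spaces with asdim(X) ≤ m and asdim(Y) ≤ n, and equip X × Y with the sum metric d((x,y),(x',y')) = d_X(x,x') + d_Y(y,y'). Then asdim(X × Y) ≤ m + n. -/

import Mathlib

open Metric Set

/-- A family `U` of subsets of a metric space is `r`-disjoint: any two points belonging to
different members of the family are at distance at least `r`. -/
def RDisjoint {X : Type*} [MetricSpace X] (r : ℝ) (U : Set (Set X)) : Prop :=
  ∀ A ∈ U, ∀ B ∈ U, A ≠ B → ∀ a ∈ A, ∀ b ∈ B, r ≤ dist a b

/-- Every member of the family `U` has diameter at most `R`. -/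
def FamBounded {X : Type*} [MetricSpace X] (R : ℝ) (U : Set (Set X)) : Prop :=
  ∀ A ∈ U, ∀ a ∈ A, ∀ b ∈ A, dist a b ≤ R

/-- `D` is an `n`-dimensional control function for `X` (in the sense of `r`-disjoint
families): for every `r > 0` there is a cover of `X` by `n + 1` families of subsets,
each family `r`-disjoint and with members of diameter at most `D r`. -/
def IsDimControl (X : Type*) [MetricSpace X] (n : ℕ) (D : ℝ → ℝ) : Prop :=
  ∀ r > 0, ∃ U : Fin (n + 1) → Set (Set X),
    (∀ i, RDisjoint r (U i)) ∧ (∀ i, FamBounded (D r) (U i)) ∧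
    ∀ x : X, ∃ i, x ∈ ⋃₀ U i

/-- `asdim X ≤ n`: `X` admits an `n`-dimensional control function. -/
def AsdimSpaceLE (X : Type*) [MetricSpace X] (n : ℕ) : Prop :=
  ∃ D : ℝ → ℝ, (∀ r > 0, 0 < D r) ∧ IsDimControl X n D

/-- The sum metric on the product of two metric spaces. -/
noncomputable def sumMetric (X Y : Type*) [MetricSpace X] [MetricSpace Y] :
    MetricSpace (X × Y) where
  dist p q := dist p.1 q.1 + dist p.2 q.2
  dist_self p := by simp
  dist_comm p q := by simp [dist_comm]
  dist_triangle p q s := by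
    have h1 := dist_triangle p.1 q.1 s.1
    have h2 := dist_triangle p.2 q.2 s.2
    try dsimp only
    linarith
  eq_of_dist_eq_zero := by
    intro p q h
    try dsimp only at h
    have h1 : dist p.1 q.1 = 0 :=
      le_antisymm (by linarith [dist_nonneg (x := p.2) (y := q.2)]) dist_nonneg
    have h2 : dist p.2 q.2 = 0 := by linarith
    exact Prod.ext (dist_eq_zero.1 h1) (dist_eq_zero.1 h2)

namespace AsdimProd


noncomputable def dl (p : ℕ) : ℝ := 1 / (2 * 3 ^ p)

lemma dl_pos (p : ℕ) : 0 < dl p := by unfold dl; positivity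

lemma dl_succ (p : ℕ) : dl p = 3 * dl (p + 1) := by
  unfold dl; rw [pow_succ]; field_simp

lemma dl_anti {p q : ℕ} (h : p ≤ q) : dl q ≤ dl p := by
  unfold dl
  apply one_div_le_one_div_of_le (by positivity)
  have : (3:ℝ) ^ p ≤ 3 ^ q := by
    apply pow_le_pow_right₀ (by norm_num) h
  linarith

lemma dl_le_half (p : ℕ) : dl p ≤ 1 / 2 := by
  have := dl_anti (Nat.zero_le p)
  simpa [dl] using this

variable {X : Type*} [MetricSpace X]

open Classical in
noncomputable def bump (L : ℝ) (S : Set X) (x : X) : ℝ :=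
  if S = ∅ then 0 else max 0 (1 - 4 * infDist x S / L)

lemma bump_nonneg (L : ℝ) (S : Set X) (x : X) : 0 ≤ bump L S x := by
  unfold bump; split
  · exact le_refl _
  · exact le_max_left _ _

lemma bump_le_one {L : ℝ} (hL : 0 < L) (S : Set X) (x : X) : bump L S x ≤ 1 := by
  unfold bump; split
  · norm_num
  · apply max_le (by norm_num)
    have h1 : 0 ≤ 4 * infDist x S / L := by
      have := infDist_nonneg (x := x) (s := S); positivity
    linarith

lemma bump_of_mem {L : ℝ} (hL : 0 < L) {S : Set X} {x : X} (hx : x ∈ S) : bump L S x = 1 := by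
  unfold bump
  rw [if_neg (Set.nonempty_iff_ne_empty.mp ⟨x, hx⟩), infDist_zero_of_mem hx]
  norm_num

lemma bump_pos {L : ℝ} (hL : 0 < L) {S : Set X} {x : X} (h : 0 < bump L S x) :
    ∃ a ∈ S, dist x a < L / 4 := by
  unfold bump at h
  by_cases hS : S = ∅
  · rw [if_pos hS] at h; exact absurd h (lt_irrefl 0)
  · rw [if_neg hS] at h
    have h2 : 0 < 1 - 4 * infDist x S / L := by
      rcases lt_max_iff.mp h with h' | h'
      · exact absurd h' (lt_irrefl 0)
      · exact h'
    have h3 : infDist x S < L / 4 := by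
      have hL' : 4 * infDist x S / L < 1 := by linarith
      rw [div_lt_one hL] at hL'
      linarith
    exact (infDist_lt_iff (Set.nonempty_iff_ne_empty.mpr hS)).mp h3

lemma bump_lip {L : ℝ} (hL : 0 < L) (S : Set X) (x x' : X) :
    |bump L S x - bump L S x'| ≤ 4 / L * dist x x' := by
  unfold bump
  by_cases hS : S = ∅
  · rw [if_pos hS, if_pos hS]
    simp only [sub_zero, abs_zero]
    positivity
  · rw [if_neg hS, if_neg hS]
    have h1 : |max 0 (1 - 4 * infDist x S / L) - max 0 (1 - 4 * infDist x' S / L)| ≤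
        |(1 - 4 * infDist x S / L) - (1 - 4 * infDist x' S / L)| := by
      rw [max_comm 0 (1 - 4 * infDist x S / L), max_comm 0 (1 - 4 * infDist x' S / L)]
      exact abs_max_sub_max_le_abs _ _ _
    have h2 : (1 - 4 * infDist x S / L) - (1 - 4 * infDist x' S / L)
        = 4 / L * (infDist x' S - infDist x S) := by ring
    have h3 : |infDist x' S - infDist x S| ≤ dist x x' := by
      rw [abs_sub_le_iff]
      constructor
      · have := infDist_le_infDist_add_dist (x := x') (y := x) (s := S)
        rw [dist_comm] at this; linarith
      · have := infDist_le_infDist_add_dist (x := x) (y := x') (s := S)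
        linarith
    calc |max 0 (1 - 4 * infDist x S / L) - max 0 (1 - 4 * infDist x' S / L)|
        ≤ |(1 - 4 * infDist x S / L) - (1 - 4 * infDist x' S / L)| := h1
      _ = |4 / L * (infDist x' S - infDist x S)| := by rw [h2]
      _ = 4 / L * |infDist x' S - infDist x S| := by
          rw [abs_mul, abs_of_pos (by positivity)]
      _ ≤ 4 / L * dist x x' := by
          apply mul_le_mul_of_nonneg_left h3 (by positivity)


section CoverFun
variable {X : Type*} [MetricSpace X]
variable {m : ℕ} (L : ℝ) (U : Fin (m + 1) → Set (Set X))

noncomputable def gg (i : Fin (m + 1)) (x : X) : ℝ := bump L (⋃₀ U i) x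

noncomputable def sg (x : X) : ℝ := ∑ i, gg L U i x

noncomputable def FF (t : ℕ) (x : X) : ℝ :=
  (∑ i ∈ Finset.univ.filter (fun i : Fin (m + 1) => (i : ℕ) < t), gg L U i x) / sg L U x

variable {L U}
variable (hL : 0 < L) (hcov : ∀ x : X, ∃ i, x ∈ ⋃₀ U i)
include hL hcov

lemma sg_ge_one (x : X) : 1 ≤ sg L U x := by
  obtain ⟨i, hi⟩ := hcov x
  have h1 : gg L U i x = 1 := bump_of_mem hL hi
  have : ∀ j ∈ Finset.univ, j ≠ i → (0:ℝ) ≤ gg L U j x := fun j _ _ => bump_nonneg _ _ _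
  calc (1:ℝ) = gg L U i x := h1.symm
    _ ≤ ∑ j, gg L U j x := Finset.single_le_sum (f := fun j => gg L U j x)
          (fun j _ => bump_nonneg _ _ _) (Finset.mem_univ i)

lemma sg_pos (x : X) : 0 < sg L U x := lt_of_lt_of_le one_pos (sg_ge_one hL hcov x)

omit hcov in
lemma sg_lip (x x' : X) : |sg L U x - sg L U x'| ≤ 4 * (m+1) / L * dist x x' := by
  unfold sg
  rw [← Finset.sum_sub_distrib]
  calc |∑ i, (gg L U i x - gg L U i x')| ≤ ∑ i, |gg L U i x - gg L U i x'| :=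
        Finset.abs_sum_le_sum_abs _ _
    _ ≤ ∑ _i : Fin (m+1), 4 / L * dist x x' := by
        apply Finset.sum_le_sum
        intro i _
        exact bump_lip hL _ x x'
    _ = 4 * (m+1) / L * dist x x' := by
        rw [Finset.sum_const, Finset.card_univ, Fintype.card_fin]
        push_cast; ring

lemma FF_zero (x : X) : FF L U 0 x = 0 := by
  unfold FF
  rw [Finset.filter_false_of_mem (by intro i _; omega), Finset.sum_empty, zero_div]

lemma FF_top (x : X) : FF L U (m + 1) x = 1 := by
  unfold FF
  rw [Finset.filter_true_of_mem (by intro i _; exact i.isLt)]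
  exact div_self (ne_of_gt (sg_pos hL hcov x))

lemma FF_mem (t : ℕ) (x : X) : 0 ≤ FF L U t x ∧ FF L U t x ≤ 1 := by
  have hs := sg_pos hL hcov x
  unfold FF
  constructor
  · apply div_nonneg _ hs.le
    exact Finset.sum_nonneg fun i _ => bump_nonneg _ _ _
  · rw [div_le_one hs]
    unfold sg
    apply Finset.sum_le_sum_of_subset_of_nonneg (Finset.filter_subset _ _)
    intro i _ _; exact bump_nonneg _ _ _

lemma FF_succ_sub (i : Fin (m+1)) (x : X) :
    FF L U ((i:ℕ) + 1) x - FF L U i x = gg L U i x / sg L U x := by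
  unfold FF
  rw [div_sub_div_same]
  congr 1
  have : (Finset.univ.filter (fun j : Fin (m + 1) => (j : ℕ) < (i:ℕ) + 1))
      = insert i (Finset.univ.filter (fun j : Fin (m + 1) => (j : ℕ) < (i:ℕ))) := by
    ext j
    simp only [Finset.mem_filter, Finset.mem_univ, true_and, Finset.mem_insert]
    constructor
    · intro h
      rcases Nat.lt_succ_iff_lt_or_eq.mp h with h | h
      · right; simpa using h
      · left; exact Fin.ext h
    · rintro (rfl | h)
      · omega
      · simp at h; omega
  rw [this, Finset.sum_insert (by simp)]
  ring

lemma FF_lip (t : ℕ) (x x' : X) :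
    |FF L U t x - FF L U t x'| ≤ 8 * (m+1) / L * dist x x' := by
  unfold FF
  have hs := sg_pos hL hcov x
  have hs' := sg_pos hL hcov x'
  have hs1 := sg_ge_one hL hcov x
  have hs1' := sg_ge_one hL hcov x'
  set h1 := ∑ i ∈ Finset.univ.filter (fun i : Fin (m + 1) => (i : ℕ) < t), gg L U i x with hh1
  set h2 := ∑ i ∈ Finset.univ.filter (fun i : Fin (m + 1) => (i : ℕ) < t), gg L U i x' with hh2
  have hh1n : 0 ≤ h1 := Finset.sum_nonneg fun i _ => bump_nonneg _ _ _
  have hh2n : 0 ≤ h2 := Finset.sum_nonneg fun i _ => bump_nonneg _ _ _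
  have hh2le : h2 ≤ sg L U x' := by
    unfold sg
    apply Finset.sum_le_sum_of_subset_of_nonneg (Finset.filter_subset _ _)
    intro i _ _; exact bump_nonneg _ _ _
  have hdh : |h1 - h2| ≤ 4 * (m+1) / L * dist x x' := by
    rw [hh1, hh2, ← Finset.sum_sub_distrib]
    calc |∑ i ∈ _, (gg L U i x - gg L U i x')| ≤ ∑ i ∈ Finset.univ.filter (fun i : Fin (m + 1) => (i : ℕ) < t), |gg L U i x - gg L U i x'| :=
          Finset.abs_sum_le_sum_abs _ _
      _ ≤ ∑ _i ∈ Finset.univ.filter (fun i : Fin (m + 1) => (i : ℕ) < t), 4 / L * dist x x' := by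
          apply Finset.sum_le_sum
          intro i _
          exact bump_lip hL _ x x'
      _ ≤ ∑ _i : Fin (m+1), 4 / L * dist x x' := by
          apply Finset.sum_le_sum_of_subset_of_nonneg (Finset.filter_subset _ _)
          intro i _ _; positivity
      _ = 4 * (m+1) / L * dist x x' := by
          rw [Finset.sum_const, Finset.card_univ, Fintype.card_fin]
          push_cast; ring
  have hds : |sg L U x - sg L U x'| ≤ 4 * (m+1) / L * dist x x' := sg_lip hL x x'
  -- |h1/s1 - h2/s2| ≤ |h1 - h2| + |s1 - s2|
  have key : |h1 / sg L U x - h2 / sg L U x'| ≤ |h1 - h2| + |sg L U x - sg L U x'| := by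
    have e : h1 / sg L U x - h2 / sg L U x'
        = ((h1 - h2) * sg L U x' + h2 * (sg L U x' - sg L U x)) / (sg L U x * sg L U x') := by
      field_simp
      ring
    rw [e, abs_div, abs_of_pos (mul_pos hs hs'), div_le_iff₀ (mul_pos hs hs')]
    have e1 : |(h1 - h2) * sg L U x' + h2 * (sg L U x' - sg L U x)|
        ≤ |h1 - h2| * sg L U x' + h2 * |sg L U x' - sg L U x| := by
      calc |(h1 - h2) * sg L U x' + h2 * (sg L U x' - sg L U x)|
          ≤ |(h1 - h2) * sg L U x'| + |h2 * (sg L U x' - sg L U x)| := abs_add_le _ _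
        _ = |h1 - h2| * sg L U x' + h2 * |sg L U x' - sg L U x| := by
            rw [abs_mul, abs_mul, abs_of_pos hs', abs_of_nonneg hh2n]
    have t1 : |h1 - h2| * sg L U x' ≤ |h1 - h2| * (sg L U x * sg L U x') := by
      apply mul_le_mul_of_nonneg_left _ (abs_nonneg _)
      nlinarith
    have t2 : h2 * |sg L U x' - sg L U x| ≤ |sg L U x - sg L U x'| * (sg L U x * sg L U x') := by
      rw [abs_sub_comm]
      calc h2 * |sg L U x - sg L U x'| ≤ sg L U x' * |sg L U x - sg L U x'| := by
            apply mul_le_mul_of_nonneg_right hh2le (abs_nonneg _)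
        _ ≤ (sg L U x * sg L U x') * |sg L U x - sg L U x'| := by
            apply mul_le_mul_of_nonneg_right _ (abs_nonneg _)
            nlinarith
        _ = |sg L U x - sg L U x'| * (sg L U x * sg L U x') := by ring
    linarith [e1, t1, t2]
  calc |h1 / sg L U x - h2 / sg L U x'| ≤ |h1 - h2| + |sg L U x - sg L U x'| := key
    _ ≤ 4 * (m+1) / L * dist x x' + 4 * (m+1) / L * dist x x' := add_le_add hdh hds
    _ = 8 * (m+1) / L * dist x x' := by ring


end CoverFun

section Comb
variable {m n : ℕ}

abbrev Lab (m n : ℕ) := Fin (m + 2) ⊕ Fin (n + 2)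

def rel (p : ℕ) (u : Lab m n → ℝ) (s t : Lab m n) : Prop := |u s - u t| ≤ dl (p + 1)

def valid (p : ℕ) (u : Lab m n → ℝ) : Prop :=
  ∀ s t : Lab m n, ¬(dl (p + 1) < |u s - u t| ∧ |u s - u t| ≤ dl p)

lemma rel_of_le {p : ℕ} {u : Lab m n → ℝ} (hv : valid p u) {s t : Lab m n}
    (h : |u s - u t| ≤ dl p) : rel p u s t := by
  by_contra hc
  exact hv s t ⟨lt_of_not_ge hc, h⟩

lemma rel_equiv {p : ℕ} {u : Lab m n → ℝ} (hv : valid p u) : Equivalence (rel p u) := by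
  constructor
  · intro s; unfold rel; simp [le_of_lt (dl_pos _)]
  · intro s t h; unfold rel at *; rwa [abs_sub_comm]
  · intro s t w h1 h2
    apply rel_of_le hv
    calc |u s - u w| ≤ |u s - u t| + |u t - u w| := abs_sub_le _ _ _
      _ ≤ dl (p+1) + dl (p+1) := add_le_add h1 h2
      _ ≤ dl p := by have := dl_succ p; have := dl_pos (p+1); linarith

lemma not_rel_gt {p : ℕ} {u : Lab m n → ℝ} (hv : valid p u) {s t : Lab m n}
    (h : ¬ rel p u s t) : dl p < |u s - u t| := by
  by_contra hc
  exact h (rel_of_le hv (le_of_not_gt hc))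

/-- number of levels -/
def PP (m n : ℕ) : ℕ := (m + n + 4) * (m + n + 4)

lemma exists_level (u : Lab m n → ℝ) : ∃ p ≤ PP m n, valid p u := by
  by_contra hc
  push_neg at hc
  -- each level p ≤ PP has a bad pair
  have hbad : ∀ p : Fin (PP m n + 1), ∃ st : Lab m n × Lab m n,
      dl ((p:ℕ) + 1) < |u st.1 - u st.2| ∧ |u st.1 - u st.2| ≤ dl (p:ℕ) := by
    intro p
    obtain ⟨s, t, h⟩ := by
      have := hc p (Nat.lt_succ_iff.mp p.isLt)
      unfold valid at this
      push_neg at this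
      exact this
    exact ⟨(s, t), h⟩
  choose f hf1 hf2 using hbad
  have hinj : Function.Injective f := by
    intro p q hpq
    by_contra hne
    rcases Ne.lt_or_gt (fun h : p = q => hne h) with h | h
    · -- p < q : dl q ≤ dl (p+1)
      have h1 := hf1 q
      have h2 := hf2 q
      rw [← hpq] at h1 h2
      have := hf1 p
      have hle : dl (q:ℕ) ≤ dl ((p:ℕ) + 1) := dl_anti (by omega)
      have := hf2 p
      linarith [hf1 p, hf2 p]
    · have hle : dl (p:ℕ) ≤ dl ((q:ℕ) + 1) := dl_anti (by omega)
      have h1 := hf1 q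
      have h2 := hf2 q
      rw [← hpq] at h1 h2
      linarith [hf1 p, hf2 p]
  have hcard := Fintype.card_le_of_injective f hinj
  simp only [Fintype.card_fin, Fintype.card_prod, Fintype.card_sum, Fintype.card_fin] at hcard
  unfold PP at hcard
  have he : m + 2 + (n + 2) = m + n + 4 := by omega
  rw [he] at hcard
  omega

section Counting

/-- number of classes of a relation -/
noncomputable def ncl (E : Lab m n → Lab m n → Prop) : ℕ := Nat.card (Quot E)

lemma ncl_ge_two {E : Lab m n → Lab m n → Prop} (hE : Equivalence E)
    {s t : Lab m n} (h : ¬ E s t) : 2 ≤ ncl E := by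
  have hne : Quot.mk E s ≠ Quot.mk E t := fun hq => h (hE.eqvGen_iff.mp (Quot.eq.mp hq))
  have hfin : Finite (Quot E) := Finite.of_surjective (Quot.mk E) Quot.exists_rep
  have hinj : Function.Injective (fun b : Bool => if b then Quot.mk E s else Quot.mk E t) := by
    intro a b hab
    cases a <;> cases b <;> simp at hab <;> first | rfl | exact absurd hab hne | exact absurd hab.symm hne
  have := Nat.card_le_card_of_injective _ hinj
  simpa [ncl] using this

lemma ncl_le {E : Lab m n → Lab m n → Prop} (hE : Equivalence E)
    (h0 : E (.inl 0) (.inr 0)) (h1 : E (.inl ⟨m+1, by omega⟩) (.inr ⟨n+1, by omega⟩)) :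
    ncl E ≤ m + n + 2 := by
  have hfin : Finite (Quot E) := Finite.of_surjective (Quot.mk E) Quot.exists_rep
  set f : Bool ⊕ (Fin m ⊕ Fin n) → Quot E := fun w =>
    match w with
    | .inl false => Quot.mk E (.inl 0)
    | .inl true => Quot.mk E (.inl ⟨m+1, by omega⟩)
    | .inr (.inl i) => Quot.mk E (.inl ⟨(i:ℕ)+1, by omega⟩)
    | .inr (.inr j) => Quot.mk E (.inr ⟨(j:ℕ)+1, by omega⟩) with hf
  have hsurj : Function.Surjective f := by
    apply Quot.ind
    intro s
    match s with
    | .inl t =>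
      rcases Nat.lt_or_ge 0 (t:ℕ) with h | h
      · rcases Nat.lt_or_ge (t:ℕ) (m+1) with h2 | h2
        · refine ⟨.inr (.inl ⟨(t:ℕ)-1, by omega⟩), ?_⟩
          simp only [hf]
          congr 1
          congr 1
          apply Fin.ext
          simp
          omega
        · refine ⟨.inl true, ?_⟩
          simp only [hf]
          congr 2
          apply Fin.ext
          simp
          omega
      · refine ⟨.inl false, ?_⟩
        simp only [hf]
        congr 2
        apply Fin.ext
        simp
        omega
    | .inr t =>
      rcases Nat.lt_or_ge 0 (t:ℕ) with h | h
      · rcases Nat.lt_or_ge (t:ℕ) (n+1) with h2 | h2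
        · refine ⟨.inr (.inr ⟨(t:ℕ)-1, by omega⟩), ?_⟩
          simp only [hf]
          congr 2
          apply Fin.ext
          simp
          omega
        · refine ⟨.inl true, ?_⟩
          simp only [hf]
          have ht : t = ⟨n+1, by omega⟩ := by apply Fin.ext; simp; omega
          rw [ht]
          exact Quot.sound h1
      · refine ⟨.inl false, ?_⟩
        simp only [hf]
        have ht : t = ⟨0, by omega⟩ := by apply Fin.ext; show (t:ℕ) = 0; omega
        rw [ht]
        exact Quot.sound h0
  have := Nat.card_le_card_of_surjective f hsurj
  unfold ncl
  have hcard : Nat.card (Bool ⊕ (Fin m ⊕ Fin n)) = m + n + 2 := by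
    simp [Nat.card_sum]
    omega
  omega

lemma rel_eq_of_card {E E' : Lab m n → Lab m n → Prop} (hE : Equivalence E) (hE' : Equivalence E')
    (hsub : ∀ s t, E' s t → E s t) (hcard : ncl E' = ncl E) : ∀ s t, E s t → E' s t := by
  have hfin : Finite (Quot E) := Finite.of_surjective (Quot.mk E) Quot.exists_rep
  have hfin' : Finite (Quot E') := Finite.of_surjective (Quot.mk E') Quot.exists_rep
  set f : Quot E' → Quot E := Quot.map id hsub with hf
  have hsurj : Function.Surjective f := by
    apply Quot.ind
    intro s
    exact ⟨Quot.mk E' s, rfl⟩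
  have hbij : Function.Bijective f := by
    rw [Nat.bijective_iff_surjective_and_card]
    exact ⟨hsurj, hcard⟩
  intro s t hst
  have : f (Quot.mk E' s) = f (Quot.mk E' t) := by
    show Quot.mk E s = Quot.mk E t
    exact Quot.sound hst
  have := hbij.1 this
  exact hE'.eqvGen_iff.mp (Quot.eq.mp this)

end Counting
end Comb

section Prod
variable {X Y : Type*} [MetricSpace X] [MetricSpace Y]
variable (m n : ℕ) (L : ℝ) (UX : Fin (m+1) → Set (Set X)) (UY : Fin (n+1) → Set (Set Y))

noncomputable def uv (z : X × Y) : Lab m n → ℝ := fun s =>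
  match s with
  | .inl t => FF L UX (t:ℕ) z.1
  | .inr t => FF L UY (t:ℕ) z.2

def admits (z : X × Y) (E : Lab m n → Lab m n → Prop) : Prop :=
  ∃ p ≤ PP m n, valid p (uv m n L UX UY z) ∧ E = rel p (uv m n L UX UY z)

open Classical in
noncomputable def idxX (E : Lab m n → Lab m n → Prop) : Fin (m+1) :=
  if h : ∃ i : Fin (m+1), ¬ E (.inl i.castSucc) (.inl i.succ) then h.choose else 0

open Classical in
noncomputable def idxY (E : Lab m n → Lab m n → Prop) : Fin (n+1) :=
  if h : ∃ j : Fin (n+1), ¬ E (.inr j.castSucc) (.inr j.succ) then h.choose else 0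

def carrier (E : Lab m n → Lab m n → Prop) (A : Set X) (B : Set Y) : Set (X × Y) :=
  {z | admits m n L UX UY z E ∧ (∃ a ∈ A, dist z.1 a < L/4) ∧ (∃ b ∈ B, dist z.2 b < L/4)}

def fam (k : ℕ) : Set (Set (X × Y)) :=
  {S | ∃ E A B, A ∈ UX (idxX m n E) ∧ B ∈ UY (idxY m n E) ∧ ncl E = k + 2 ∧
    S = carrier m n L UX UY E A B}

variable {m n L UX UY}
variable (hL : 0 < L) (hcovX : ∀ x : X, ∃ i, x ∈ ⋃₀ UX i) (hcovY : ∀ y : Y, ∃ j, y ∈ ⋃₀ UY j)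

section UVlem
include hL hcovX hcovY

lemma uv_inl_zero (z : X × Y) : uv m n L UX UY z (.inl 0) = 0 := by
  show FF L UX ((0 : Fin (m+2)) : ℕ) z.1 = 0
  have h0 : ((0 : Fin (m+2)) : ℕ) = 0 := rfl
  rw [h0]
  exact FF_zero hL hcovX z.1

lemma uv_inl_top (z : X × Y) : uv m n L UX UY z (.inl ⟨m+1, by omega⟩) = 1 := by
  show FF L UX ((⟨m+1, by omega⟩ : Fin (m+2)) : ℕ) z.1 = 1
  exact FF_top hL hcovX z.1

lemma uv_inr_zero (z : X × Y) : uv m n L UX UY z (.inr 0) = 0 := by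
  show FF L UY ((0 : Fin (n+2)) : ℕ) z.2 = 0
  have h0 : ((0 : Fin (n+2)) : ℕ) = 0 := rfl
  rw [h0]
  exact FF_zero hL hcovY z.2

lemma uv_inr_top (z : X × Y) : uv m n L UX UY z (.inr ⟨n+1, by omega⟩) = 1 := by
  show FF L UY ((⟨n+1, by omega⟩ : Fin (n+2)) : ℕ) z.2 = 1
  exact FF_top hL hcovY z.2

lemma uv_close (z z' : X × Y) (s : Lab m n) :
    |uv m n L UX UY z s - uv m n L UX UY z' s|
      ≤ 8 * (m+n+1) / L * (dist z.1 z'.1 + dist z.2 z'.2) := by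
  have hd1 : (0:ℝ) ≤ dist z.1 z'.1 := dist_nonneg
  have hd2 : (0:ℝ) ≤ dist z.2 z'.2 := dist_nonneg
  match s with
  | .inl t =>
    refine (FF_lip hL hcovX (t:ℕ) z.1 z'.1).trans ?_
    have h1 : 8 * ((m:ℝ)+1) / L * dist z.1 z'.1 ≤ 8 * ((m:ℝ)+(n:ℝ)+1) / L * (dist z.1 z'.1) := by
      gcongr
      linarith [Nat.cast_nonneg (α := ℝ) n]
    refine h1.trans ?_
    nlinarith [mul_nonneg (div_nonneg (by positivity : (0:ℝ) ≤ 8 * ((m:ℝ)+(n:ℝ)+1)) hL.le) hd2]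
  | .inr t =>
    refine (FF_lip hL hcovY (t:ℕ) z.2 z'.2).trans ?_
    have h1 : 8 * ((n:ℝ)+1) / L * dist z.2 z'.2 ≤ 8 * ((m:ℝ)+(n:ℝ)+1) / L * (dist z.2 z'.2) := by
      gcongr
      linarith [Nat.cast_nonneg (α := ℝ) m]
    refine h1.trans ?_
    nlinarith [mul_nonneg (div_nonneg (by positivity : (0:ℝ) ≤ 8 * ((m:ℝ)+(n:ℝ)+1)) hL.le) hd1]

/-- somewhere along the X chain the relation must break -/
lemma breakX {p : ℕ} (z : X × Y) (hv : valid p (uv m n L UX UY z)) :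
    ∃ i : Fin (m+1), ¬ rel p (uv m n L UX UY z) (.inl i.castSucc) (.inl i.succ) := by
  by_contra hc
  push_neg at hc
  set u := uv m n L UX UY z with hu
  have key : ∀ t : ℕ, (ht : t < m+2) → rel p u (.inl 0) (.inl ⟨t, ht⟩) := by
    intro t
    induction t with
    | zero => intro ht; exact (rel_equiv hv).refl _
    | succ t ih =>
      intro ht
      have ht' : t < m + 2 := by omega
      have h1 := ih ht'
      have ht'' : t < m + 1 := by omega
      have h2 := hc ⟨t, ht''⟩
      have e1 : (⟨t, ht''⟩ : Fin (m+1)).castSucc = (⟨t, ht'⟩ : Fin (m+2)) := by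
        apply Fin.ext; simp
      have e2 : (⟨t, ht''⟩ : Fin (m+1)).succ = (⟨t+1, ht⟩ : Fin (m+2)) := by
        apply Fin.ext; simp
      rw [e1, e2] at h2
      exact (rel_equiv hv).trans h1 h2
  have hlast := key (m+1) (by omega)
  unfold rel at hlast
  rw [hu] at hlast
  rw [uv_inl_zero hL hcovX hcovY z, uv_inl_top hL hcovX hcovY z] at hlast
  have := dl_le_half (p+1)
  rw [abs_sub_comm] at hlast
  simp only [sub_zero, abs_one] at hlast
  linarith

lemma breakY {p : ℕ} (z : X × Y) (hv : valid p (uv m n L UX UY z)) :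
    ∃ j : Fin (n+1), ¬ rel p (uv m n L UX UY z) (.inr j.castSucc) (.inr j.succ) := by
  by_contra hc
  push_neg at hc
  set u := uv m n L UX UY z with hu
  have key : ∀ t : ℕ, (ht : t < n+2) → rel p u (.inr 0) (.inr ⟨t, ht⟩) := by
    intro t
    induction t with
    | zero => intro ht; exact (rel_equiv hv).refl _
    | succ t ih =>
      intro ht
      have ht' : t < n + 2 := by omega
      have h1 := ih ht'
      have ht'' : t < n + 1 := by omega
      have h2 := hc ⟨t, ht''⟩
      have e1 : (⟨t, ht''⟩ : Fin (n+1)).castSucc = (⟨t, ht'⟩ : Fin (n+2)) := by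
        apply Fin.ext; simp
      have e2 : (⟨t, ht''⟩ : Fin (n+1)).succ = (⟨t+1, ht⟩ : Fin (n+2)) := by
        apply Fin.ext; simp
      rw [e1, e2] at h2
      exact (rel_equiv hv).trans h1 h2
  have hlast := key (n+1) (by omega)
  unfold rel at hlast
  rw [hu] at hlast
  rw [uv_inr_zero hL hcovX hcovY z, uv_inr_top hL hcovX hcovY z] at hlast
  have := dl_le_half (p+1)
  rw [abs_sub_comm] at hlast
  simp only [sub_zero, abs_one] at hlast
  linarith

/-- from a break at `i`, the point is close to some set of the family `UX i` -/
lemma tagX {p : ℕ} (z : X × Y) (hv : valid p (uv m n L UX UY z)) (i : Fin (m+1))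
    (hb : ¬ rel p (uv m n L UX UY z) (.inl i.castSucc) (.inl i.succ)) :
    ∃ A ∈ UX i, ∃ a ∈ A, dist z.1 a < L / 4 := by
  have hgt := not_rel_gt hv hb
  have e1 : uv m n L UX UY z (.inl i.castSucc) = FF L UX (i:ℕ) z.1 := by
    show FF L UX ((i.castSucc : Fin (m+2)) : ℕ) z.1 = _
    congr 1
  have e2 : uv m n L UX UY z (.inl i.succ) = FF L UX ((i:ℕ)+1) z.1 := by
    show FF L UX ((i.succ : Fin (m+2)) : ℕ) z.1 = _
    congr 1
  rw [e1, e2] at hgt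
  have hsub := FF_succ_sub hL hcovX i z.1
  have hggnn : 0 ≤ gg L UX i z.1 := bump_nonneg _ _ _
  have hsg := sg_pos hL hcovX z.1
  have habs : |FF L UX (i:ℕ) z.1 - FF L UX ((i:ℕ)+1) z.1| = gg L UX i z.1 / sg L UX z.1 := by
    rw [abs_sub_comm, hsub]
    exact abs_of_nonneg (div_nonneg hggnn hsg.le)
  rw [habs] at hgt
  have hpos : 0 < gg L UX i z.1 := by
    by_contra hc
    push_neg at hc
    have : gg L UX i z.1 = 0 := le_antisymm hc hggnn
    rw [this, zero_div] at hgt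
    exact absurd hgt (not_lt.mpr (dl_pos p).le)
  obtain ⟨a, ha, hd⟩ := bump_pos hL hpos
  obtain ⟨A, hA, haA⟩ := ha
  exact ⟨A, hA, a, haA, hd⟩

lemma tagY {p : ℕ} (z : X × Y) (hv : valid p (uv m n L UX UY z)) (j : Fin (n+1))
    (hb : ¬ rel p (uv m n L UX UY z) (.inr j.castSucc) (.inr j.succ)) :
    ∃ B ∈ UY j, ∃ b ∈ B, dist z.2 b < L / 4 := by
  have hgt := not_rel_gt hv hb
  have e1 : uv m n L UX UY z (.inr j.castSucc) = FF L UY (j:ℕ) z.2 := by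
    show FF L UY ((j.castSucc : Fin (n+2)) : ℕ) z.2 = _
    congr 1
  have e2 : uv m n L UX UY z (.inr j.succ) = FF L UY ((j:ℕ)+1) z.2 := by
    show FF L UY ((j.succ : Fin (n+2)) : ℕ) z.2 = _
    congr 1
  rw [e1, e2] at hgt
  have hsub := FF_succ_sub hL hcovY j z.2
  have hggnn : 0 ≤ gg L UY j z.2 := bump_nonneg _ _ _
  have hsg := sg_pos hL hcovY z.2
  have habs : |FF L UY (j:ℕ) z.2 - FF L UY ((j:ℕ)+1) z.2| = gg L UY j z.2 / sg L UY z.2 := by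
    rw [abs_sub_comm, hsub]
    exact abs_of_nonneg (div_nonneg hggnn hsg.le)
  rw [habs] at hgt
  have hpos : 0 < gg L UY j z.2 := by
    by_contra hc
    push_neg at hc
    have : gg L UY j z.2 = 0 := le_antisymm hc hggnn
    rw [this, zero_div] at hgt
    exact absurd hgt (not_lt.mpr (dl_pos p).le)
  obtain ⟨b, hb', hd⟩ := bump_pos hL hpos
  obtain ⟨B, hB, hbB⟩ := hb'
  exact ⟨B, hB, b, hbB, hd⟩

end UVlem

section Main
include hL hcovX hcovY

lemma cover_main (z : X × Y) :
    ∃ k : Fin (m + n + 1), ∃ S ∈ fam m n L UX UY (k : ℕ), z ∈ S := by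
  obtain ⟨p, hp, hv⟩ := exists_level (uv m n L UX UY z)
  set u := uv m n L UX UY z with hu
  set E := rel p u with hE
  have hEq : Equivalence E := rel_equiv hv
  -- tags
  have hbx : ∃ i : Fin (m+1), ¬ E (.inl i.castSucc) (.inl i.succ) := breakX hL hcovX hcovY z hv
  have hby : ∃ j : Fin (n+1), ¬ E (.inr j.castSucc) (.inr j.succ) := breakY hL hcovX hcovY z hv
  have hix : idxX m n E = hbx.choose := by rw [idxX, dif_pos hbx]
  have hiy : idxY m n E = hby.choose := by rw [idxY, dif_pos hby]
  obtain ⟨A, hA, a, haA, hda⟩ := tagX hL hcovX hcovY z hv hbx.choose hbx.choose_spec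
  obtain ⟨B, hB, b, hbB, hdb⟩ := tagY hL hcovX hcovY z hv hby.choose hby.choose_spec
  -- cardinality bounds
  have hge : 2 ≤ ncl E := by
    apply ncl_ge_two hEq (s := .inl 0) (t := .inl ⟨m+1, by omega⟩)
    intro hrel
    have : |u (.inl 0) - u (.inl ⟨m+1, by omega⟩)| ≤ dl (p+1) := hrel
    rw [hu, uv_inl_zero hL hcovX hcovY z, uv_inl_top hL hcovX hcovY z] at this
    rw [abs_sub_comm] at this
    simp only [sub_zero, abs_one] at this
    linarith [dl_le_half (p+1)]
  have hle : ncl E ≤ m + n + 2 := by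
    apply ncl_le hEq
    · show |u (.inl 0) - u (.inr 0)| ≤ dl (p+1)
      rw [hu, uv_inl_zero hL hcovX hcovY z, uv_inr_zero hL hcovX hcovY z]
      simp only [sub_zero, abs_zero]
      exact (dl_pos (p+1)).le
    · show |u (.inl ⟨m+1, by omega⟩) - u (.inr ⟨n+1, by omega⟩)| ≤ dl (p+1)
      rw [hu, uv_inl_top hL hcovX hcovY z, uv_inr_top hL hcovX hcovY z]
      simp only [sub_self, abs_zero]
      exact (dl_pos (p+1)).le
  refine ⟨⟨ncl E - 2, by omega⟩, carrier m n L UX UY E A B, ?_, ?_⟩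
  · refine ⟨E, A, B, ?_, ?_, ?_, rfl⟩
    · rw [hix]; exact hA
    · rw [hiy]; exact hB
    · simp only []
      omega
  · exact ⟨⟨p, hp, hv, hE⟩, ⟨a, haA, hda⟩, ⟨b, hbB, hdb⟩⟩

omit hcovX hcovY in
lemma bounded_main {DXL DYL : ℝ}
    (hDX : ∀ i, FamBounded DXL (UX i)) (hDY : ∀ j, FamBounded DYL (UY j))
    {k : ℕ} {S : Set (X × Y)} (hS : S ∈ fam m n L UX UY k)
    {z z' : X × Y} (hz : z ∈ S) (hz' : z' ∈ S) :
    dist z.1 z'.1 + dist z.2 z'.2 ≤ DXL + DYL + L := by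
  obtain ⟨E, A, B, hA, hB, hk, rfl⟩ := hS
  obtain ⟨-, ⟨a, haA, hda⟩, ⟨b, hbB, hdb⟩⟩ := hz
  obtain ⟨-, ⟨a', haA', hda'⟩, ⟨b', hbB', hdb'⟩⟩ := hz'
  have h1 : dist z.1 z'.1 ≤ DXL + L/2 := by
    have := hDX _ A hA a haA a' haA'
    calc dist z.1 z'.1 ≤ dist z.1 a + dist a a' + dist a' z'.1 := dist_triangle4 _ _ _ _
      _ ≤ L/4 + DXL + L/4 := by
          rw [dist_comm a' z'.1]
          exact add_le_add (add_le_add hda.le this) hda'.le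
      _ = DXL + L/2 := by ring
  have h2 : dist z.2 z'.2 ≤ DYL + L/2 := by
    have := hDY _ B hB b hbB b' hbB'
    calc dist z.2 z'.2 ≤ dist z.2 b + dist b b' + dist b' z'.2 := dist_triangle4 _ _ _ _
      _ ≤ L/4 + DYL + L/4 := by
          rw [dist_comm b' z'.2]
          exact add_le_add (add_le_add hdb.le this) hdb'.le
      _ = DYL + L/2 := by ring
  linarith

end Main
end Prod

/-- the key subordination lemma for two close points at comparable levels -/
lemma sub_of_close {m n : ℕ} {p p' : ℕ} {u u' : Lab m n → ℝ}
    (hpp : p ≤ p') (hp' : p' ≤ PP m n) (hv : valid p u)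
    (hclose : ∀ s, |u s - u' s| ≤ dl (PP m n + 1)) :
    ∀ s t, rel p' u' s t → rel p u s t := by
  intro s t h
  apply rel_of_le hv
  have h1 : |u s - u t| ≤ |u' s - u' t| + 2 * dl (PP m n + 1) := by
    have hs := hclose s
    have ht := hclose t
    calc |u s - u t| = |(u s - u' s) + (u' s - u' t) + (u' t - u t)| := by ring_nf
      _ ≤ |(u s - u' s) + (u' s - u' t)| + |u' t - u t| := abs_add_le _ _
      _ ≤ |u s - u' s| + |u' s - u' t| + |u' t - u t| := by
          apply add_le_add (abs_add_le _ _) le_rfl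
      _ ≤ dl (PP m n + 1) + |u' s - u' t| + dl (PP m n + 1) := by
          rw [abs_sub_comm (u' t) (u t)]
          exact add_le_add (add_le_add hs (le_refl _)) ht
      _ = |u' s - u' t| + 2 * dl (PP m n + 1) := by ring
  have h2 : |u' s - u' t| ≤ dl (p' + 1) := h
  have h3 : dl (p' + 1) ≤ dl (p + 1) := dl_anti (by omega)
  have h4 : dl (PP m n + 1) ≤ dl (p + 1) := dl_anti (by omega)
  have h5 : dl p = 3 * dl (p+1) := dl_succ p
  linarith



section Final
variable {X Y : Type*} [MetricSpace X] [MetricSpace Y]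
variable {m n : ℕ} {L r : ℝ} {UX : Fin (m+1) → Set (Set X)} {UY : Fin (n+1) → Set (Set Y)}

lemma disj_main (hL : 0 < L)
    (hcovX : ∀ x : X, ∃ i, x ∈ ⋃₀ UX i) (hcovY : ∀ y : Y, ∃ j, y ∈ ⋃₀ UY j)
    (hdX : ∀ i, RDisjoint L (UX i)) (hdY : ∀ j, RDisjoint L (UY j))
    (hr : 0 < r) (hL2 : 2 * r ≤ L)
    (hLg : 8 * ((m:ℝ)+(n:ℝ)+1) * r ≤ dl (PP m n + 1) * L)
    {k : ℕ} {S₁ S₂ : Set (X × Y)} (h₁ : S₁ ∈ fam m n L UX UY k) (h₂ : S₂ ∈ fam m n L UX UY k)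
    (hne : S₁ ≠ S₂) {z z' : X × Y} (hz : z ∈ S₁) (hz' : z' ∈ S₂) :
    r ≤ dist z.1 z'.1 + dist z.2 z'.2 := by
  obtain ⟨E, A, B, hA, hB, hk, rfl⟩ := h₁
  obtain ⟨E', A', B', hA', hB', hk', rfl⟩ := h₂
  obtain ⟨⟨p, hp, hv, hE⟩, ⟨a, haA, hda⟩, ⟨b, hbB, hdb⟩⟩ := hz
  obtain ⟨⟨p', hp', hv', hE'⟩, ⟨a', haA', hda'⟩, ⟨b', hbB', hdb'⟩⟩ := hz'
  by_cases hEE : E = E'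
  · subst hEE
    by_cases hAA : A = A'
    · by_cases hBB : B = B'
      · subst hAA; subst hBB; exact absurd rfl hne
      · have hsep := hdY _ B hB B' hB' hBB b hbB b' hbB'
        have h4 := dist_triangle4 b z.2 z'.2 b'
        rw [dist_comm b z.2] at h4
        have hd1 : (0:ℝ) ≤ dist z.1 z'.1 := dist_nonneg
        have : dist z'.2 b' = dist b' z'.2 := dist_comm _ _
        linarith [hdb, hdb']
    · have hsep := hdX _ A hA A' hA' hAA a haA a' haA'
      have h4 := dist_triangle4 a z.1 z'.1 a'
      rw [dist_comm a z.1] at h4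
      have hd2 : (0:ℝ) ≤ dist z.2 z'.2 := dist_nonneg
      linarith [hda, hda']
  · by_contra hlt
    push_neg at hlt
    have hclose : ∀ s, |uv m n L UX UY z s - uv m n L UX UY z' s| ≤ dl (PP m n + 1) := by
      intro s
      refine (uv_close hL hcovX hcovY z z' s).trans ?_
      have hd : dist z.1 z'.1 + dist z.2 z'.2 ≤ r := hlt.le
      have hnn : (0:ℝ) ≤ 8 * ((m:ℝ)+(n:ℝ)+1) / L := by positivity
      calc 8 * ((m:ℝ)+(n:ℝ)+1) / L * (dist z.1 z'.1 + dist z.2 z'.2)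
          ≤ 8 * ((m:ℝ)+(n:ℝ)+1) / L * r := mul_le_mul_of_nonneg_left hd hnn
        _ = 8 * ((m:ℝ)+(n:ℝ)+1) * r / L := by ring
        _ ≤ dl (PP m n + 1) := by
            rw [div_le_iff₀ hL]
            linarith
    apply hEE
    have hcard : ncl E' = ncl E := by rw [hk, hk']
    rcases le_total p p' with hpp | hpp
    · have hsub : ∀ s t, E' s t → E s t := by
        rw [hE, hE']
        exact sub_of_close hpp hp' hv hclose
      have hrev := rel_eq_of_card (hE ▸ rel_equiv hv) (hE' ▸ rel_equiv hv') hsub hcard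
      funext s t
      exact propext ⟨fun h => hrev s t h, fun h => hsub s t h⟩
    · have hclose' : ∀ s, |uv m n L UX UY z' s - uv m n L UX UY z s| ≤ dl (PP m n + 1) := by
        intro s; rw [abs_sub_comm]; exact hclose s
      have hsub : ∀ s t, E s t → E' s t := by
        rw [hE, hE']
        exact sub_of_close hpp hp hv' hclose'
      have hrev := rel_eq_of_card (hE' ▸ rel_equiv hv') (hE ▸ rel_equiv hv) hsub hcard.symm
      funext s t
      exact propext ⟨fun h => hsub s t h, fun h => hrev s t h⟩

end Final
end AsdimProd

/-- If `asdim X ≤ m` and `asdim Y ≤ n`, then the product `X × Y` with the sum metric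
satisfies `asdim (X × Y) ≤ m + n`. -/
theorem stmt1 {X Y : Type*} [MetricSpace X] [MetricSpace Y] (m n : ℕ)
    (hX : AsdimSpaceLE X m) (hY : AsdimSpaceLE Y n) :
    @AsdimSpaceLE (X × Y) (sumMetric X Y) (m + n) := by
  obtain ⟨DX, hDXpos, hDXc⟩ := hX
  obtain ⟨DY, hDYpos, hDYc⟩ := hY
  have hgpos : 0 < AsdimProd.dl (AsdimProd.PP m n + 1) := AsdimProd.dl_pos _
  set γ := AsdimProd.dl (AsdimProd.PP m n + 1) with hγ
  set Lf : ℝ → ℝ := fun r => max (2*r) (8*((m:ℝ)+(n:ℝ)+1)*r/γ) with hLf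
  have hLfpos : ∀ r : ℝ, 0 < r → 0 < Lf r := fun r hr =>
    lt_of_lt_of_le (by linarith) (le_max_left _ _)
  refine ⟨fun r => DX (Lf r) + DY (Lf r) + Lf r, ?_, ?_⟩
  · intro r hr
    have h1 := hDXpos _ (hLfpos r hr)
    have h2 := hDYpos _ (hLfpos r hr)
    have h3 := hLfpos r hr
    dsimp only
    linarith
  · intro r hr
    obtain ⟨UX, hdX, hbX, hcX⟩ := hDXc (Lf r) (hLfpos r hr)
    obtain ⟨UY, hdY, hbY, hcY⟩ := hDYc (Lf r) (hLfpos r hr)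
    have hL2 : 2 * r ≤ Lf r := le_max_left _ _
    have hLg : 8 * ((m:ℝ)+(n:ℝ)+1) * r ≤ γ * Lf r := by
      have h1 : 8*((m:ℝ)+(n:ℝ)+1)*r/γ ≤ Lf r := le_max_right _ _
      calc 8 * ((m:ℝ)+(n:ℝ)+1) * r = γ * (8*((m:ℝ)+(n:ℝ)+1)*r/γ) := by
            field_simp
        _ ≤ γ * Lf r := mul_le_mul_of_nonneg_left h1 hgpos.le
    refine ⟨fun k => AsdimProd.fam m n (Lf r) UX UY (k:ℕ), ?_, ?_, ?_⟩
    · intro k S₁ h₁ S₂ h₂ hne zz hzz zz' hzz'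
      have hdist : @dist _ (sumMetric X Y).toDist zz zz' = dist zz.1 zz'.1 + dist zz.2 zz'.2 := rfl
      show r ≤ @dist _ (sumMetric X Y).toDist zz zz'
      rw [hdist]
      exact AsdimProd.disj_main (hLfpos r hr) hcX hcY hdX hdY hr hL2 hLg h₁ h₂ hne hzz hzz'
    · intro k S hS zz hzz zz' hzz'
      have hdist : @dist _ (sumMetric X Y).toDist zz zz' = dist zz.1 zz'.1 + dist zz.2 zz'.2 := rfl
      show @dist _ (sumMetric X Y).toDist zz zz' ≤ _
      rw [hdist]
      exact AsdimProd.bounded_main (hLfpos r hr) hbX hbY hS hzz hzz'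
    · intro zz
      obtain ⟨k, S, hS, hzS⟩ := AsdimProd.cover_main (hLfpos r hr) hcX hcY zz
      exact ⟨k, S, hS, hzS⟩
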